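/- Let ξ be the random variable with independent Q̃-symbols determined by matrices Q̃ and P̃. If the matrix P̃ has only finitely many columns containing a zero entry, then the topological support of μ_ξ is a finite union of nondegenerate closed intervals (μ_ξ is of pure S-type). -/

import Mathlib

open MeasureTheory Filter Finset Topology

/-- The coding map of the `Q̃`-representation: it sends a digit sequence
`ω`, with `k`-th digit in `{0, 1, ..., N k}`, to the point of `[0,1]` given by
formula (5) of the paper: `x = ∑_k D_k(x) L_{k-1}(x)`, i.e. the unique point in
the intersection of the nested cylinder intervals `Δ_{ω₁...ω_k}`. -/
noncomputable def codingMap (N : ℕ → ℕ) (q : (k : ℕ) → Fin (N k + 1) → ℝ)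
    (ω : (k : ℕ) → Fin (N k + 1)) : ℝ :=
  ∑' k : ℕ, (∑ j : Fin (N k + 1), if (j : ℕ) < (ω k : ℕ) then q k j else 0) *
    ∏ s ∈ Finset.range k, q s (ω s)

/-- `Γ_{Q̃(V)}`: the set of points of `[0,1]` admitting a `Q̃`-representation
whose `k`-th digit lies in `V k` for every `k`. -/
noncomputable def QtSet (N : ℕ → ℕ) (q : (k : ℕ) → Fin (N k + 1) → ℝ)
    (V : (k : ℕ) → Finset (Fin (N k + 1))) : Set ℝ :=
  codingMap N q '' {ω | ∀ k, ω k ∈ V k}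

/-- The topological support of a measure on `ℝ`: the set of points all of whose
neighbourhoods have positive measure.  It is the smallest closed set of full
measure. -/
def msupport (μ : Measure ℝ) : Set ℝ :=
  {x : ℝ | ∀ ε > 0, μ (Set.Ioo (x - ε) (x + ε)) ≠ 0}

namespace SType

variable (N : ℕ → ℕ) (q : (k : ℕ) → Fin (N k + 1) → ℝ)

/-- `B k m = ∑_{j < m} q k j`. -/
noncomputable def B (k m : ℕ) : ℝ :=
  ∑ j : Fin (N k + 1), if (j : ℕ) < m then q k j else 0

/-- Left endpoint of the depth-`n` cylinder interval containing `ω`. -/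
noncomputable def A (n : ℕ) (ω : (k : ℕ) → Fin (N k + 1)) : ℝ :=
  ∑ k ∈ Finset.range n, B N q k (ω k) * ∏ s ∈ Finset.range k, q s (ω s)

/-- Length of the depth-`n` cylinder interval containing `ω`. -/
noncomputable def L (n : ℕ) (ω : (k : ℕ) → Fin (N k + 1)) : ℝ :=
  ∏ k ∈ Finset.range n, q k (ω k)

variable {N q}
variable (hq : ∀ k i, 0 < q k i) (hqs : ∀ k, ∑ i, q k i = 1)

lemma codingMap_eq (ω : (k : ℕ) → Fin (N k + 1)) :
    codingMap N q ω = ∑' k, B N q k (ω k) * L N q k ω := rfl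

include hq in
lemma B_nonneg (k m : ℕ) : 0 ≤ B N q k m := by
  apply Finset.sum_nonneg
  intro j _
  split <;> [exact (hq k j).le; rfl]

lemma B_succ (k m : ℕ) (hm : m < N k + 1) :
    B N q k (m + 1) = B N q k m + q k ⟨m, hm⟩ := by
  unfold B
  have key : ∀ j : Fin (N k + 1), (if (j : ℕ) < m + 1 then q k j else 0)
      = (if (j : ℕ) < m then q k j else 0) + (if j = ⟨m, hm⟩ then q k j else 0) := by
    intro j
    by_cases h2 : j = ⟨m, hm⟩
    · subst h2; simp
    · have hne : (j : ℕ) ≠ m := fun h => h2 (Fin.ext h)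
      by_cases h1 : (j : ℕ) < m
      · rw [if_pos (by omega), if_pos h1, if_neg h2, add_zero]
      · rw [if_neg (by omega), if_neg h1, if_neg h2, add_zero]
  rw [Finset.sum_congr rfl (fun j _ => key j), Finset.sum_add_distrib,
    Finset.sum_ite_eq' Finset.univ (⟨m, hm⟩ : Fin (N k + 1)) (q k),
    if_pos (Finset.mem_univ _)]

include hqs in
lemma B_all (k : ℕ) : B N q k (N k + 1) = 1 := by
  unfold B
  rw [← hqs k]
  apply Finset.sum_congr rfl
  intro j _
  rw [if_pos j.isLt]

include hq in
lemma B_mono (k : ℕ) {m m' : ℕ} (h : m ≤ m') : B N q k m ≤ B N q k m' := by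
  apply Finset.sum_le_sum
  intro j _
  split
  · rw [if_pos (by omega)]
  · split <;> [exact (hq k j).le; rfl]

include hq hqs in
lemma B_add_q_le_one (k : ℕ) (i : Fin (N k + 1)) : B N q k i + q k i ≤ 1 := by
  rw [← B_succ (q := q) k i i.isLt]
  calc B N q k ((i : ℕ) + 1) ≤ B N q k (N k + 1) := B_mono hq k (by omega)
    _ = 1 := B_all hqs k

include hq in
lemma L_pos (n : ℕ) (ω : (k : ℕ) → Fin (N k + 1)) : 0 < L N q n ω :=
  Finset.prod_pos fun k _ => hq k (ω k)

lemma L_succ (n : ℕ) (ω : (k : ℕ) → Fin (N k + 1)) :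
    L N q (n + 1) ω = L N q n ω * q n (ω n) := Finset.prod_range_succ _ _

lemma A_succ (n : ℕ) (ω : (k : ℕ) → Fin (N k + 1)) :
    A N q (n + 1) ω = A N q n ω + B N q n (ω n) * L N q n ω := Finset.sum_range_succ _ _

include hq in
lemma A_mono (ω : (k : ℕ) → Fin (N k + 1)) {n m : ℕ} (h : n ≤ m) :
    A N q n ω ≤ A N q m ω := by
  apply Finset.sum_le_sum_of_subset_of_nonneg (Finset.range_subset_range.2 h)
  intro k _ _
  exact mul_nonneg (B_nonneg hq k _) (L_pos hq k ω).le

include hq hqs in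
lemma endpoint_anti (ω : (k : ℕ) → Fin (N k + 1)) {n m : ℕ} (h : n ≤ m) :
    A N q m ω + L N q m ω ≤ A N q n ω + L N q n ω := by
  induction m, h using Nat.le_induction with
  | base => exact le_refl _
  | succ m hm ih =>
    refine le_trans ?_ ih
    rw [A_succ, L_succ]
    have hL := L_pos hq m ω
    nlinarith [B_add_q_le_one hq hqs m (ω m)]

include hq hqs in
lemma A_le (ω : (k : ℕ) → Fin (N k + 1)) (m n : ℕ) :
    A N q m ω ≤ A N q n ω + L N q n ω := by
  rcases le_total m n with h | h
  · exact (A_mono hq ω h).trans (le_add_of_nonneg_right (L_pos hq n ω).le)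
  · calc A N q m ω ≤ A N q m ω + L N q m ω := le_add_of_nonneg_right (L_pos hq m ω).le
      _ ≤ _ := endpoint_anti hq hqs ω h

include hq hqs in
lemma summable_term (ω : (k : ℕ) → Fin (N k + 1)) :
    Summable (fun k => B N q k (ω k) * L N q k ω) := by
  apply summable_of_sum_range_le (c := 1)
  · intro k
    exact mul_nonneg (B_nonneg hq k _) (L_pos hq k ω).le
  · intro n
    have := A_le hq hqs ω n 0
    simpa [A, L] using this

include hq hqs in
lemma codingMap_mem (ω : (k : ℕ) → Fin (N k + 1)) (n : ℕ) :
    codingMap N q ω ∈ Set.Icc (A N q n ω) (A N q n ω + L N q n ω) := by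
  constructor
  · have := Summable.sum_le_tsum (Finset.range n)
      (fun k _ => mul_nonneg (B_nonneg hq k _) (L_pos hq k ω).le)
      (summable_term hq hqs ω)
    simpa [codingMap_eq, A, L] using this
  · rw [codingMap_eq]
    exact Real.tsum_le_of_sum_range_le
      (fun k => mul_nonneg (B_nonneg hq k _) (L_pos hq k ω).le)
      (fun m => A_le hq hqs ω m n)

lemma A_congr {ω ω' : (k : ℕ) → Fin (N k + 1)} (n : ℕ) (h : ∀ k < n, ω k = ω' k) :
    A N q n ω = A N q n ω' := by
  apply Finset.sum_congr rfl
  intro k hk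
  rw [Finset.mem_range] at hk
  rw [h k hk]
  congr 1
  apply Finset.prod_congr rfl
  intro s hs
  rw [Finset.mem_range] at hs
  rw [h s (hs.trans hk)]

lemma L_congr {ω ω' : (k : ℕ) → Fin (N k + 1)} (n : ℕ) (h : ∀ k < n, ω k = ω' k) :
    L N q n ω = L N q n ω' := by
  apply Finset.prod_congr rfl
  intro k hk
  rw [Finset.mem_range] at hk
  rw [h k hk]

include hq in
lemma L_le_prod_sup (n : ℕ) (ω : (k : ℕ) → Fin (N k + 1)) :
    L N q n ω ≤ ∏ k ∈ Finset.range n, ⨆ i, q k i := by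
  apply Finset.prod_le_prod
  · intro k _; exact (hq k (ω k)).le
  · intro k _
    exact le_ciSup (Set.Finite.bddAbove (Set.finite_range _)) (ω k)

include hq in
lemma tendsto_L (hmax : Tendsto (fun n => ∏ k ∈ Finset.range n, ⨆ i, q k i) atTop (nhds 0))
    (ω : (k : ℕ) → Fin (N k + 1)) :
    Tendsto (fun n => L N q n ω) atTop (nhds 0) :=
  squeeze_zero (fun n => (L_pos hq n ω).le) (fun n => L_le_prod_sup hq n ω) hmax

omit hq in
include hqs in
lemma exists_digit (k : ℕ) (t : ℝ) :
    ∃ i : Fin (N k + 1), 0 ≤ t → t ≤ 1 → B N q k i ≤ t ∧ t ≤ B N q k i + q k i := by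
  by_cases h01 : 0 ≤ t ∧ t ≤ 1
  · obtain ⟨h0, h1⟩ := h01
    have hne : (Finset.univ.filter fun i : Fin (N k + 1) => B N q k i ≤ t).Nonempty := by
      refine ⟨0, Finset.mem_filter.2 ⟨Finset.mem_univ _, ?_⟩⟩
      have : B N q k ((0 : Fin (N k + 1)) : ℕ) = 0 := by
        simp [B]
      rw [this]; exact h0
    set i := (Finset.univ.filter fun i : Fin (N k + 1) => B N q k i ≤ t).max' hne with hi
    have hmem := (Finset.univ.filter fun i : Fin (N k + 1) => B N q k i ≤ t).max'_mem hne
    rw [Finset.mem_filter] at hmem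
    refine ⟨i, fun _ _ => ⟨hmem.2, ?_⟩⟩
    by_cases hlast : (i : ℕ) = N k
    · have : B N q k i + q k i = 1 := by
        rw [← B_succ (q := q) k i i.isLt, hlast, B_all hqs k]
      rw [this]; exact h1
    · by_contra hcon
      push_neg at hcon
      have hilt : (i : ℕ) + 1 < N k + 1 := by have := i.isLt; omega
      have : B N q k ((⟨(i : ℕ) + 1, hilt⟩ : Fin (N k + 1)) : ℕ) ≤ t := by
        rw [B_succ (q := q) k i i.isLt]
        exact le_of_lt (by simpa using hcon)
      have hmem' : (⟨(i : ℕ) + 1, hilt⟩ : Fin (N k + 1)) ∈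
          Finset.univ.filter fun i : Fin (N k + 1) => B N q k i ≤ t :=
        Finset.mem_filter.2 ⟨Finset.mem_univ _, this⟩
      have := Finset.le_max' _ _ hmem'
      rw [← hi] at this
      have : (i : ℕ) + 1 ≤ (i : ℕ) := this
      omega
  · exact ⟨0, fun h0 h1 => absurd ⟨h0, h1⟩ h01⟩

include hq hqs in
/-- Every point of the depth-`n` cylinder interval is in the image of the cylinder. -/
lemma exists_preimage (hmax : Tendsto (fun n => ∏ k ∈ Finset.range n, ⨆ i, q k i) atTop (nhds 0))
    (ω : (k : ℕ) → Fin (N k + 1)) (n : ℕ) (x : ℝ)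
    (hx : x ∈ Set.Icc (A N q n ω) (A N q n ω + L N q n ω)) :
    ∃ ω', (∀ k < n, ω' k = ω k) ∧ codingMap N q ω' = x := by
  classical
  choose D hD using exists_digit hqs (N := N)
  -- recursive state: (left endpoint, length)
  let st : ℕ → ℝ × ℝ := fun m => Nat.rec ((0 : ℝ), (1 : ℝ))
    (fun k s =>
      let δ : Fin (N k + 1) := if h : k < n then ω k else D k ((x - s.1) / s.2)
      (s.1 + B N q k δ * s.2, s.2 * q k δ)) m
  let ω' : (k : ℕ) → Fin (N k + 1) := fun k =>
    if h : k < n then ω k else D k ((x - (st k).1) / (st k).2)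
  have hst : ∀ k, st k = (A N q k ω', L N q k ω') := by
    intro k
    induction k with
    | zero => simp [st, A, L]
    | succ k ih =>
      have : st (k + 1) = ((st k).1 + B N q k (ω' k) * (st k).2, (st k).2 * q k (ω' k)) := by
        show (let δ : Fin (N k + 1) := if h : k < n then ω k else D k ((x - (st k).1) / (st k).2)
          ((st k).1 + B N q k δ * (st k).2, (st k).2 * q k δ)) = _
        rfl
      rw [this, ih, A_succ, L_succ]
  have hpre : ∀ k < n, ω' k = ω k := fun k hk => dif_pos hk
  have hinv : ∀ k, x ∈ Set.Icc (A N q k ω') (A N q k ω' + L N q k ω') := by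
    intro k
    induction k with
    | zero =>
      constructor
      · simp only [A]
        rw [Finset.sum_range_zero]
        calc (0:ℝ) ≤ A N q n ω := by
              have : A N q 0 ω ≤ A N q n ω := A_mono hq ω (Nat.zero_le n)
              simpa [A] using this
          _ ≤ x := hx.1
      · have h2 : A N q n ω + L N q n ω ≤ A N q 0 ω + L N q 0 ω :=
          endpoint_anti hq hqs ω (Nat.zero_le n)
        have := hx.2.trans h2
        simpa [A, L] using this
    | succ k ih =>
      by_cases hk : k < n
      · have hk1 : k + 1 ≤ n := hk
        have e1 : A N q (k+1) ω' = A N q (k+1) ω := A_congr (k+1) (fun s hs => hpre s (by omega))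
        have e2 : L N q (k+1) ω' = L N q (k+1) ω := L_congr (k+1) (fun s hs => hpre s (by omega))
        rw [e1, e2]
        exact ⟨(A_mono hq ω hk1).trans hx.1, hx.2.trans (endpoint_anti hq hqs ω hk1)⟩
      · have hLpos := L_pos hq k ω'
        have ht0 : 0 ≤ (x - A N q k ω') / L N q k ω' :=
          div_nonneg (by linarith [ih.1]) hLpos.le
        have ht1 : (x - A N q k ω') / L N q k ω' ≤ 1 := by
          rw [div_le_one hLpos]
          linarith [ih.2]
        have hωk : ω' k = D k ((x - A N q k ω') / L N q k ω') := by
          simp only [ω', dif_neg hk, hst k]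
        have hDk := hD k ((x - A N q k ω') / L N q k ω') ht0 ht1
        have hb1 : B N q k (ω' k) ≤ (x - A N q k ω') / L N q k ω' := by
          rw [hωk]; exact hDk.1
        have hb2 : (x - A N q k ω') / L N q k ω' ≤ B N q k (ω' k) + q k (ω' k) := by
          rw [hωk]; exact hDk.2
        have h1 : B N q k (ω' k) * L N q k ω' ≤ x - A N q k ω' :=
          (le_div_iff₀ hLpos).1 hb1
        have h2 : x - A N q k ω' ≤ (B N q k (ω' k) + q k (ω' k)) * L N q k ω' :=
          (div_le_iff₀ hLpos).1 hb2
        rw [A_succ, L_succ] at *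
        constructor
        · linarith
        · nlinarith
  refine ⟨ω', hpre, ?_⟩
  have hcm := fun k => codingMap_mem hq hqs ω' k
  have hdist : ∀ k, |codingMap N q ω' - x| ≤ L N q k ω' := by
    intro k
    have h1 := (hcm k).1
    have h2 := (hcm k).2
    have h3 := (hinv k).1
    have h4 := (hinv k).2
    rw [abs_le]
    constructor <;> linarith
  have hle : |codingMap N q ω' - x| ≤ 0 :=
    ge_of_tendsto (tendsto_L hq hmax ω') (Filter.Eventually.of_forall hdist)
  have := abs_nonneg (codingMap N q ω' - x)
  have : |codingMap N q ω' - x| = 0 := le_antisymm hle this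
  rw [abs_eq_zero] at this
  linarith [this]

include hq hqs in
lemma measurable_codingMap : Measurable (codingMap N q) := by
  have hA : ∀ n, Measurable (fun ω : (k : ℕ) → Fin (N k + 1) => ∑ k ∈ Finset.range n,
      B N q k (ω k) * ∏ s ∈ Finset.range k, q s (ω s)) := by
    intro n
    apply Finset.measurable_sum
    intro k _
    apply Measurable.mul
    · exact (measurable_of_countable (fun i : Fin (N k + 1) => B N q k i)).comp
        (measurable_pi_apply k)
    · apply Finset.measurable_prod
      intro s _
      exact (measurable_of_countable (fun i : Fin (N s + 1) => q s i)).comp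
        (measurable_pi_apply s)
  apply measurable_of_tendsto_metrizable hA
  rw [tendsto_pi_nhds]
  intro ω
  exact (summable_term hq hqs ω).hasSum.tendsto_sum_nat

end SType

open scoped Classical in
/-- Theorem 3, case 1): if the matrix `P̃` has only finitely many columns containing
a zero entry, then the topological support of `μ_ξ` is a finite union of
nondegenerate closed intervals, i.e. `μ_ξ` is of pure S-type. -/
theorem support_S_type (N : ℕ → ℕ) (p q : (k : ℕ) → Fin (N k + 1) → ℝ)
    (μ : Measure ((k : ℕ) → Fin (N k + 1))) [IsProbabilityMeasure μ]
    (hp : ∀ k i, 0 ≤ p k i) (hq : ∀ k i, 0 < q k i)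
    (hps : ∀ k, ∑ i, p k i = 1) (hqs : ∀ k, ∑ i, q k i = 1)
    (hmax : Tendsto (fun n => ∏ k ∈ Finset.range n, ⨆ i, q k i) atTop (nhds 0))
    (hμ : ∀ (n : ℕ) (ω : (k : ℕ) → Fin (N k + 1)),
      μ {x | ∀ k < n, x k = ω k} = ENNReal.ofReal (∏ k ∈ Finset.range n, p k (ω k)))
    (μξ : Measure ℝ) (hμξ : μξ = Measure.map (codingMap N q) μ)
    (hfin : {k | ∃ i, p k i = 0}.Finite) :
    ∃ (m : ℕ) (a b : Fin m → ℝ), (∀ j, a j < b j) ∧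
      msupport μξ = ⋃ j, Set.Icc (a j) (b j) := by
  subst hμξ
  have cmMeas : Measurable (codingMap N q) := SType.measurable_codingMap hq hqs
  -- all columns beyond `n₀` have strictly positive entries
  obtain ⟨n₀, hn₀⟩ : ∃ n₀, ∀ k, n₀ ≤ k → ∀ i, p k i ≠ 0 := by
    obtain ⟨n, hn⟩ := hfin.bddAbove
    refine ⟨n + 1, fun k hk i hpi => ?_⟩
    have : k ≤ n := hn ⟨i, hpi⟩
    omega
  -- admissible prefixes
  let T := {c : (k : Fin n₀) → Fin (N k + 1) // ∀ k : Fin n₀, p k.1 (c k) ≠ 0}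
  let extend : ((k : Fin n₀) → Fin (N k + 1)) → ((k : ℕ) → Fin (N k + 1)) :=
    fun c k => if h : k < n₀ then c ⟨k, h⟩ else 0
  have hextend : ∀ c (k : ℕ) (h : k < n₀), extend c k = c ⟨k, h⟩ := by
    intro c k h
    simp only [extend, dif_pos h]
  let m := Fintype.card T
  let e : Fin m ≃ T := (Fintype.equivFin T).symm
  refine ⟨m, fun j => SType.A N q n₀ (extend (e j).val),
    fun j => SType.A N q n₀ (extend (e j).val) + SType.L N q n₀ (extend (e j).val),
    fun j => lt_add_of_pos_right _ (SType.L_pos hq n₀ _), ?_⟩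
  -- a good sequence's image lies in the union of intervals
  have hgood : ∀ ω : (k : ℕ) → Fin (N k + 1), (∀ k < n₀, p k (ω k) ≠ 0) →
      codingMap N q ω ∈ ⋃ j, Set.Icc (SType.A N q n₀ (extend (e j).val))
        (SType.A N q n₀ (extend (e j).val) + SType.L N q n₀ (extend (e j).val)) := by
    intro ω hω
    have hc : ∀ k : Fin n₀, p k.1 ((fun k : Fin n₀ => ω k) k) ≠ 0 := fun k => hω k k.isLt
    set c : T := ⟨fun k : Fin n₀ => ω k, hc⟩
    refine Set.mem_iUnion.2 ⟨e.symm c, ?_⟩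
    have hval : (e (e.symm c)).val = c.val := by rw [e.apply_symm_apply]
    rw [hval]
    have hpr : ∀ k < n₀, extend c.val k = ω k := by
      intro k hk
      exact hextend c.val k hk
    have e1 : SType.A N q n₀ (extend c.val) = SType.A N q n₀ ω := SType.A_congr n₀ hpr
    have e2 : SType.L N q n₀ (extend c.val) = SType.L N q n₀ ω := SType.L_congr n₀ hpr
    rw [e1, e2]
    exact SType.codingMap_mem hq hqs ω n₀
  -- bad sequences form a null set
  have hbad : μ {ω : (k : ℕ) → Fin (N k + 1) | ¬ ∀ k < n₀, p k (ω k) ≠ 0} = 0 := by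
    refine measure_mono_null (t := ⋃ (c : (k : Fin n₀) → Fin (N k + 1))
      (_ : ∃ k : Fin n₀, p k.1 (c k) = 0),
      {ρ : (k : ℕ) → Fin (N k + 1) | ∀ k < n₀, ρ k = extend c k}) ?_ ?_
    · intro ω hω
      simp only [Set.mem_setOf_eq] at hω
      push_neg at hω
      obtain ⟨k, hk, hpk⟩ := hω
      refine Set.mem_iUnion.2 ⟨fun s : Fin n₀ => ω s, Set.mem_iUnion.2 ⟨⟨⟨k, hk⟩, hpk⟩, ?_⟩⟩
      intro s hs
      exact (hextend (fun t : Fin n₀ => ω t) s hs).symm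
    · apply measure_iUnion_null
      intro c
      apply measure_iUnion_null
      rintro ⟨k, hk⟩
      rw [hμ n₀ (extend c)]
      have : ∏ s ∈ Finset.range n₀, p s (extend c s) = 0 := by
        apply Finset.prod_eq_zero (Finset.mem_range.2 k.isLt)
        rw [show extend c k.val = c ⟨k.val, k.isLt⟩ from hextend c k.val k.isLt]
        simpa using hk
      rw [this, ENNReal.ofReal_zero]
  ext x
  simp only [msupport, Set.mem_setOf_eq]
  constructor
  · intro hx
    by_contra hxU
    have hU : IsClosed (⋃ j, Set.Icc (SType.A N q n₀ (extend (e j).val))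
        (SType.A N q n₀ (extend (e j).val) + SType.L N q n₀ (extend (e j).val))) :=
      isClosed_iUnion_of_finite fun j => isClosed_Icc
    obtain ⟨ε, hε, hball⟩ := Metric.isOpen_iff.1 hU.isOpen_compl x hxU
    refine hx ε hε ?_
    rw [Measure.map_apply cmMeas measurableSet_Ioo]
    apply measure_mono_null _ hbad
    intro ω hω
    simp only [Set.mem_preimage] at hω
    simp only [Set.mem_setOf_eq]
    intro hgoodω
    have := hgood ω hgoodω
    have hmem : codingMap N q ω ∈ Metric.ball x ε := by
      rw [Real.ball_eq_Ioo]
      exact hω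
    exact (hball hmem) this
  · intro hx ε hε
    obtain ⟨j, hj⟩ := Set.mem_iUnion.1 hx
    set ω := extend (e j).val with hω
    have hx' : x ∈ Set.Icc (SType.A N q n₀ ω) (SType.A N q n₀ ω + SType.L N q n₀ ω) := hj
    obtain ⟨ω', hpre, hcod⟩ := SType.exists_preimage hq hqs hmax ω n₀ x hx'
    obtain ⟨n, hLn, hn₀n⟩ : ∃ n, SType.L N q n ω' < ε ∧ n₀ ≤ n :=
      (((SType.tendsto_L hq hmax ω').eventually (gt_mem_nhds hε)).and
        (eventually_ge_atTop n₀)).exists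
    rw [Measure.map_apply cmMeas measurableSet_Ioo]
    have hsub : {ρ : (k : ℕ) → Fin (N k + 1) | ∀ k < n, ρ k = ω' k} ⊆
        codingMap N q ⁻¹' Set.Ioo (x - ε) (x + ε) := by
      intro ρ hρ
      simp only [Set.mem_setOf_eq] at hρ
      have e1 : SType.A N q n ρ = SType.A N q n ω' := SType.A_congr n hρ
      have e2 : SType.L N q n ρ = SType.L N q n ω' := SType.L_congr n hρ
      have h1 := SType.codingMap_mem hq hqs ρ n
      rw [e1, e2] at h1
      have h2 := SType.codingMap_mem hq hqs ω' n
      rw [hcod] at h2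
      simp only [Set.mem_preimage, Set.mem_Ioo]
      constructor
      · linarith [h1.1, h2.2]
      · linarith [h1.2, h2.1]
    refine fun h0 => ?_
    have hle : μ {ρ : (k : ℕ) → Fin (N k + 1) | ∀ k < n, ρ k = ω' k} ≤
        μ (codingMap N q ⁻¹' Set.Ioo (x - ε) (x + ε)) := measure_mono hsub
    rw [h0] at hle
    have hcyl := hμ n ω'
    have hpos : 0 < ∏ k ∈ Finset.range n, p k (ω' k) := by
      apply Finset.prod_pos
      intro k hk
      rcases lt_or_ge k n₀ with h | h
      · refine lt_of_le_of_ne (hp k (ω' k)) (Ne.symm ?_)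
        rw [hpre k h, hω, show extend (e j).val k = (e j).val ⟨k, h⟩ from hextend (e j).val k h]
        exact (e j).prop ⟨k, h⟩
      · exact lt_of_le_of_ne (hp k (ω' k)) (Ne.symm (hn₀ k h (ω' k)))
    rw [hcyl] at hle
    have := ENNReal.ofReal_pos.2 hpos
    exact absurd (le_antisymm hle zero_le) this.ne'
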